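/- Let (H, Ẋ, Λ) be a dataset with n ≥ n_h and tr(Λ) > 0, let HΛ^{1/2} = U S V⊤ be a singular value decomposition (U ∈ ℝ^{n_h×n_h} and V ∈ ℝ^{n×n} orthogonal, S ∈ ℝ^{n_h×n}), and define H_s := (n_h/tr(Λ))^{1/2} U (S S⊤)^{1/2} and Ẋ_s := (n_h/tr(Λ))^{1/2} Ẋ Λ^{1/2} V [I_{n_h} 0]⊤. Then Ξ(H_s, Ẋ_s, (tr(Λ)/n_h) I_{n_h}) − Ξ(H, Ẋ, Λ) equals the block-diagonal matrix diag( Ẋ Λ^{1/2} V diag(0_{n_h}, I_{n−n_h}) V⊤ Λ^{1/2} Ẋ⊤ , 0_{n_h×n_h} ); in particular this difference is positive semidefinite. -/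

import Mathlib

open Matrix

lemma sum_ite_coe {m : ℕ} (a : ℕ) (ha : a < m) (f : Fin m → ℝ) :
    ∑ k : Fin m, (if (k : ℕ) = a then f k else 0) = f ⟨a, ha⟩ := by
  rw [Finset.sum_eq_single (⟨a, ha⟩ : Fin m)]
  · simp
  · intro b _ hb
    rw [if_neg]
    intro h; exact hb (Fin.ext h)
  · simp

section aux
variable {nh n : ℕ} (σ : Fin nh → ℝ)

lemma aux_SS (hn : nh ≤ n) :
    (Matrix.of fun (i : Fin nh) (j : Fin n) => if (j : ℕ) = (i : ℕ) then σ i else 0) *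
      (Matrix.of fun (i : Fin nh) (j : Fin n) => if (j : ℕ) = (i : ℕ) then σ i else 0)ᵀ =
    Matrix.diagonal (fun i => σ i * σ i) := by
  ext i j
  simp only [Matrix.mul_apply, Matrix.transpose_apply, Matrix.of_apply]
  have key : ∀ k : Fin n,
      (if (k : ℕ) = (i : ℕ) then σ i else 0) * (if (k : ℕ) = (j : ℕ) then σ j else 0) =
      (if (k : ℕ) = (i : ℕ) then (if (i : ℕ) = (j : ℕ) then σ i * σ j else 0) else 0) := by
    intro k
    by_cases h1 : (k : ℕ) = (i : ℕ)
    · by_cases h2 : (k : ℕ) = (j : ℕ)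
      · rw [if_pos h1, if_pos h2, if_pos h1, if_pos (h1.symm.trans h2)]
      · rw [if_pos h1, if_neg h2, mul_zero, if_pos h1, if_neg (fun h => h2 (h1.trans h))]
    · rw [if_neg h1, zero_mul, if_neg h1]
  simp only [key]
  rw [sum_ite_coe (i : ℕ) (lt_of_lt_of_le i.isLt hn)]
  by_cases hij : i = j
  · subst hij; simp [Matrix.diagonal_apply_eq]
  · rw [if_neg (fun h => hij (Fin.ext h)), Matrix.diagonal_apply_ne _ hij]

lemma aux_PP :
    (Matrix.of fun (i : Fin n) (j : Fin nh) => if (i : ℕ) = (j : ℕ) then (1 : ℝ) else 0) *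
      (Matrix.of fun (i : Fin n) (j : Fin nh) => if (i : ℕ) = (j : ℕ) then (1 : ℝ) else 0)ᵀ =
    1 - (Matrix.of fun (i j : Fin n) => if i = j ∧ nh ≤ (i : ℕ) then (1 : ℝ) else 0) := by
  ext i j
  simp only [Matrix.mul_apply, Matrix.transpose_apply, Matrix.of_apply, Matrix.sub_apply,
    Matrix.one_apply]
  have key : ∀ k : Fin nh,
      (if (i : ℕ) = (k : ℕ) then (1:ℝ) else 0) * (if (j : ℕ) = (k : ℕ) then 1 else 0) =
      (if (k : ℕ) = (i : ℕ) then (if (i : ℕ) = (j : ℕ) then 1 else 0) else 0) := by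
    intro k
    by_cases h1 : (i : ℕ) = (k : ℕ)
    · by_cases h2 : (j : ℕ) = (k : ℕ)
      · rw [if_pos h1, if_pos h2, one_mul, if_pos h1.symm, if_pos (h1.trans h2.symm)]
      · rw [if_pos h1, if_neg h2, mul_zero, if_pos h1.symm,
          if_neg (fun h => h2 (h.symm.trans h1))]
    · rw [if_neg h1, zero_mul, if_neg (fun h => h1 h.symm)]
  simp only [key]
  by_cases hi : (i : ℕ) < nh
  · rw [sum_ite_coe (i : ℕ) hi]
    by_cases hij : i = j
    · subst hij
      simp [Nat.not_le.mpr hi]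
    · simp [hij, show ¬((i:ℕ) = (j:ℕ)) from fun h => hij (Fin.ext h)]
  · rw [Finset.sum_eq_zero
      (fun (k : Fin nh) _ => if_neg (fun h : (k:ℕ) = (i:ℕ) => hi (h ▸ k.isLt)))]
    by_cases hij : i = j
    · subst hij
      simp [Nat.le_of_not_lt hi]
    · simp [hij]

lemma aux_PS :
    (Matrix.of fun (i : Fin n) (j : Fin nh) => if (i : ℕ) = (j : ℕ) then (1 : ℝ) else 0) *
      Matrix.diagonal σ =
    (Matrix.of fun (i : Fin nh) (j : Fin n) => if (j : ℕ) = (i : ℕ) then σ i else 0)ᵀ := by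
  ext i j
  simp only [Matrix.mul_diagonal, Matrix.of_apply, Matrix.transpose_apply, ite_mul, one_mul,
    zero_mul]

lemma aux_FT :
    (Matrix.of fun (i j : Fin n) => if i = j ∧ nh ≤ (i : ℕ) then (1 : ℝ) else 0)ᵀ =
    Matrix.of fun (i j : Fin n) => if i = j ∧ nh ≤ (i : ℕ) then (1 : ℝ) else 0 := by
  ext i j
  simp only [Matrix.transpose_apply, Matrix.of_apply]
  refine if_congr ?_ rfl rfl
  constructor <;> rintro ⟨rfl, h⟩ <;> exact ⟨rfl, h⟩

lemma aux_FF :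
    (Matrix.of fun (i j : Fin n) => if i = j ∧ nh ≤ (i : ℕ) then (1 : ℝ) else 0) *
      (Matrix.of fun (i j : Fin n) => if i = j ∧ nh ≤ (i : ℕ) then (1 : ℝ) else 0) =
    Matrix.of fun (i j : Fin n) => if i = j ∧ nh ≤ (i : ℕ) then (1 : ℝ) else 0 := by
  ext i j
  simp only [Matrix.mul_apply, Matrix.of_apply]
  rw [Finset.sum_eq_single j]
  · by_cases h : i = j ∧ nh ≤ (i : ℕ)
    · obtain ⟨rfl, h2⟩ := h
      simp [h2]
    · rw [if_neg h, zero_mul]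
  · intro b _ hb
    rw [if_neg (fun hh : b = j ∧ nh ≤ (b:ℕ) => hb hh.1), mul_zero]
  · simp

end aux

/-- The symmetric data matrix
`Ξ(H, Ẋ, Λ) := [[tr(Λ)δ I_{n_x} − ẊΛẊᵀ, ẊΛHᵀ],[HΛẊᵀ, −HΛHᵀ]]`. -/
noncomputable def XiMat {k : Type*} [Fintype k] (n_x n_h : ℕ) (δ : ℝ)
    (H : Matrix (Fin n_h) k ℝ) (Xd : Matrix (Fin n_x) k ℝ) (Λ : Matrix k k ℝ) :
    Matrix (Fin n_x ⊕ Fin n_h) (Fin n_x ⊕ Fin n_h) ℝ :=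
  Matrix.fromBlocks ((Matrix.trace Λ * δ) • 1 - Xd * Λ * Xdᵀ) (Xd * Λ * Hᵀ)
    (H * Λ * Xdᵀ) (-(H * Λ * Hᵀ))

set_option maxHeartbeats 1000000 in
/-- Let `(H, Ẋ, Λ)` be a dataset with `n ≥ n_h` and `tr(Λ) > 0`, let
`HΛ^{1/2} = USVᵀ` be a singular value decomposition (`U`, `V` orthogonal, `S`
rectangular diagonal with nonnegative singular values `σ`), let `Ssq` be the positive
semidefinite square root of `SSᵀ`, and define `H_s := (n_h/tr(Λ))^{1/2} U Ssq` and
`Ẋ_s := (n_h/tr(Λ))^{1/2} Ẋ Λ^{1/2} V [I_{n_h} 0]ᵀ`. Then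
`Ξ(H_s, Ẋ_s, (tr(Λ)/n_h) I) − Ξ(H, Ẋ, Λ)
  = diag(Ẋ Λ^{1/2} V diag(0_{n_h}, I_{n−n_h}) Vᵀ Λ^{1/2} Ẋᵀ, 0)`;
in particular the difference is positive semidefinite. -/
theorem stmt1 (n_x n_u n : ℕ) (hx : 0 < n_x) (hu : 0 < n_u)
    (hn : n_x + n_u ≤ n) (δ : ℝ) (hδ : 0 < δ)
    (H : Matrix (Fin (n_x + n_u)) (Fin n) ℝ) (Xd : Matrix (Fin n_x) (Fin n) ℝ)
    (l : Fin n → ℝ) (hl : ∀ i, 0 ≤ l i)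
    (htr : 0 < Matrix.trace (Matrix.diagonal l))
    (U : Matrix (Fin (n_x + n_u)) (Fin (n_x + n_u)) ℝ)
    (hU : Uᵀ * U = 1) (hU' : U * Uᵀ = 1)
    (V : Matrix (Fin n) (Fin n) ℝ) (hV : Vᵀ * V = 1) (hV' : V * Vᵀ = 1)
    (σ : Fin (n_x + n_u) → ℝ) (hσ : ∀ i, 0 ≤ σ i)
    (S : Matrix (Fin (n_x + n_u)) (Fin n) ℝ)
    (hS : S = Matrix.of fun (i : Fin (n_x + n_u)) (j : Fin n) =>
      if (j : ℕ) = (i : ℕ) then σ i else 0)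
    (hSVD : H * Matrix.diagonal (fun i => Real.sqrt (l i)) = U * S * Vᵀ)
    (Ssq : Matrix (Fin (n_x + n_u)) (Fin (n_x + n_u)) ℝ)
    (hSsqPSD : Ssq.PosSemidef) (hSsq : Ssq * Ssq = S * Sᵀ) :
    XiMat n_x (n_x + n_u) δ
        (Real.sqrt (((n_x + n_u : ℕ) : ℝ) / Matrix.trace (Matrix.diagonal l)) • (U * Ssq))
        (Real.sqrt (((n_x + n_u : ℕ) : ℝ) / Matrix.trace (Matrix.diagonal l)) •
          (Xd * Matrix.diagonal (fun i => Real.sqrt (l i)) * V *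
            Matrix.of fun (i : Fin n) (j : Fin (n_x + n_u)) =>
              if (i : ℕ) = (j : ℕ) then (1 : ℝ) else 0))
        ((Matrix.trace (Matrix.diagonal l) / ((n_x + n_u : ℕ) : ℝ)) • 1) -
      XiMat n_x (n_x + n_u) δ H Xd (Matrix.diagonal l) =
    Matrix.fromBlocks
      (Xd * Matrix.diagonal (fun i => Real.sqrt (l i)) * V *
        (Matrix.of fun (i j : Fin n) =>
          if i = j ∧ (n_x + n_u) ≤ (i : ℕ) then (1 : ℝ) else 0) *
        Vᵀ * Matrix.diagonal (fun i => Real.sqrt (l i)) * Xdᵀ) 0 0 0 ∧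
    (XiMat n_x (n_x + n_u) δ
        (Real.sqrt (((n_x + n_u : ℕ) : ℝ) / Matrix.trace (Matrix.diagonal l)) • (U * Ssq))
        (Real.sqrt (((n_x + n_u : ℕ) : ℝ) / Matrix.trace (Matrix.diagonal l)) •
          (Xd * Matrix.diagonal (fun i => Real.sqrt (l i)) * V *
            Matrix.of fun (i : Fin n) (j : Fin (n_x + n_u)) =>
              if (i : ℕ) = (j : ℕ) then (1 : ℝ) else 0))
        ((Matrix.trace (Matrix.diagonal l) / ((n_x + n_u : ℕ) : ℝ)) • 1) -
      XiMat n_x (n_x + n_u) δ H Xd (Matrix.diagonal l)).PosSemidef := by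
  have htne : Matrix.trace (Matrix.diagonal l) ≠ 0 := ne_of_gt htr
  have hnhne : ((n_x + n_u : ℕ) : ℝ) ≠ 0 := Nat.cast_ne_zero.mpr (by omega)
  have hnhpos : (0:ℝ) < ((n_x + n_u : ℕ) : ℝ) := by positivity
  set t := Matrix.trace (Matrix.diagonal l) with ht
  set r := Real.sqrt (((n_x + n_u : ℕ) : ℝ) / t) with hr
  set L := Matrix.diagonal (fun i => Real.sqrt (l i)) with hLdef
  set P := (Matrix.of fun (i : Fin n) (j : Fin (n_x + n_u)) =>
    if (i : ℕ) = (j : ℕ) then (1 : ℝ) else 0) with hPdef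
  set F := (Matrix.of fun (i j : Fin n) =>
    if i = j ∧ (n_x + n_u) ≤ (i : ℕ) then (1 : ℝ) else 0) with hFdef
  have hr2 : r * r = ((n_x + n_u : ℕ) : ℝ) / t :=
    Real.mul_self_sqrt (by positivity)
  have hsmul : ∀ {p q : ℕ} (A : Matrix (Fin p) (Fin (n_x + n_u)) ℝ)
      (B : Matrix (Fin q) (Fin (n_x + n_u)) ℝ),
      (r • A) * ((t / ((n_x + n_u : ℕ) : ℝ)) • (1 : Matrix (Fin (n_x+n_u)) (Fin (n_x+n_u)) ℝ))
        * (r • B)ᵀ = A * Bᵀ := by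
    intro p q A B
    rw [Matrix.transpose_smul, Matrix.smul_mul, Matrix.mul_smul, Matrix.mul_smul,
      Matrix.smul_mul, Matrix.mul_one, smul_smul, Matrix.smul_mul, smul_smul, hr2,
      show ((n_x + n_u : ℕ) : ℝ) / t * (t / ((n_x + n_u : ℕ) : ℝ)) = 1 from by field_simp,
      one_smul]
  have hLL : L * L = Matrix.diagonal l := by
    rw [hLdef, Matrix.diagonal_mul_diagonal]
    exact congrArg Matrix.diagonal (funext fun i => Real.mul_self_sqrt (hl i))
  have hLT : Lᵀ = L := Matrix.diagonal_transpose _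
  have hSS' : S * Sᵀ = Matrix.diagonal (fun i => σ i * σ i) := by
    rw [hS]; exact aux_SS σ hn
  have hD : Ssq = Matrix.diagonal σ := by
    open scoped MatrixOrder Matrix.Norms.L2Operator in
    exact (CFC.sqrt_unique (a := S * Sᵀ) hSsq (Matrix.nonneg_iff_posSemidef.mpr hSsqPSD)).symm.trans
      (CFC.sqrt_unique (by rw [Matrix.diagonal_mul_diagonal, hSS'])
        (Matrix.nonneg_iff_posSemidef.mpr (Matrix.posSemidef_diagonal_iff.mpr hσ)))
  have hPS' : P * Matrix.diagonal σ = Sᵀ := by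
    rw [hS, hPdef]; exact aux_PS σ
  have hPS2 : Matrix.diagonal σ * Pᵀ = S := by
    have := congrArg Matrix.transpose hPS'
    simpa [Matrix.transpose_mul, Matrix.diagonal_transpose] using this
  have hPP' : P * Pᵀ = 1 - F := by
    rw [hPdef, hFdef]; exact aux_PP
  have hFT' : Fᵀ = F := by rw [hFdef]; exact aux_FT
  have hFF' : F * F = F := by rw [hFdef]; exact aux_FF
  have hSVD' : H * L = U * (S * Vᵀ) := by rw [hSVD, Matrix.mul_assoc]
  have hHL : L * Hᵀ = V * (Sᵀ * Uᵀ) := by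
    have := congrArg Matrix.transpose hSVD
    simpa [Matrix.transpose_mul, hLT, Matrix.mul_assoc] using this
  have htr1 : Matrix.trace ((t / ((n_x + n_u : ℕ) : ℝ)) •
      (1 : Matrix (Fin (n_x+n_u)) (Fin (n_x+n_u)) ℝ)) = t := by
    rw [Matrix.trace_smul, Matrix.trace_one, smul_eq_mul, Fintype.card_fin,
      div_mul_cancel₀ t hnhne]
  have hSymm : Ssqᵀ = Ssq := by
    rw [← Matrix.conjTranspose_eq_transpose_of_trivial]
    exact hSsqPSD.isHermitian.eq
  have heq : XiMat n_x (n_x + n_u) δ (r • (U * Ssq)) (r • (Xd * L * V * P))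
        ((t / ((n_x + n_u : ℕ) : ℝ)) • 1) -
      XiMat n_x (n_x + n_u) δ H Xd (Matrix.diagonal l) =
      Matrix.fromBlocks (Xd * L * V * F * Vᵀ * L * Xdᵀ) 0 0 0 := by
    rw [XiMat, XiMat, sub_eq_add_neg, Matrix.fromBlocks_neg, Matrix.fromBlocks_add,
      Matrix.fromBlocks_inj]
    refine ⟨?_, ?_, ?_, ?_⟩
    · -- block (1,1)
      rw [htr1, hsmul]
      have hre : ∀ (X Y Z : Matrix (Fin n_x) (Fin n_x) ℝ), X - Y + -(X - Z) = Z - Y := by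
        intro X Y Z; abel
      rw [hre]
      simp only [Matrix.transpose_mul, Matrix.mul_assoc, hLT]
      rw [← Matrix.mul_assoc P Pᵀ, hPP', Matrix.sub_mul, Matrix.one_mul]
      simp only [Matrix.mul_sub]
      rw [show Xd * (Matrix.diagonal l * Xdᵀ) = Xd * (L * (V * (Vᵀ * (L * Xdᵀ)))) from by
        rw [← Matrix.mul_assoc V Vᵀ, hV', Matrix.one_mul, ← Matrix.mul_assoc L L, hLL]]
      abel
    · -- block (1,2)
      rw [hsmul]
      simp only [Matrix.transpose_mul, hD, Matrix.diagonal_transpose, Matrix.mul_assoc]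
      rw [← Matrix.mul_assoc P, hPS']
      rw [show Xd * (Matrix.diagonal l * Hᵀ) = Xd * (L * (V * (Sᵀ * Uᵀ))) from by
        rw [← hLL, Matrix.mul_assoc L L, hHL]]
      abel
    · -- block (2,1)
      rw [hsmul]
      simp only [Matrix.transpose_mul, Matrix.mul_assoc, hLT, hD, Matrix.diagonal_transpose]
      rw [← Matrix.mul_assoc (Matrix.diagonal σ) Pᵀ, hPS2]
      rw [show H * (Matrix.diagonal l * Xdᵀ) = U * (S * (Vᵀ * (L * Xdᵀ))) from by
        rw [← hLL, Matrix.mul_assoc L L, ← Matrix.mul_assoc H L, hSVD', Matrix.mul_assoc U,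
          Matrix.mul_assoc S]]
      abel
    · -- block (2,2)
      rw [hsmul]
      simp only [Matrix.transpose_mul, Matrix.mul_assoc, hD, Matrix.diagonal_transpose, neg_neg]
      rw [← Matrix.mul_assoc (Matrix.diagonal σ) (Matrix.diagonal σ),
        Matrix.diagonal_mul_diagonal, ← hSS', Matrix.mul_assoc S Sᵀ]
      rw [show H * (Matrix.diagonal l * Hᵀ) = U * (S * (Sᵀ * Uᵀ)) from by
        rw [← hLL, Matrix.mul_assoc L L, hHL, ← Matrix.mul_assoc H L, hSVD', Matrix.mul_assoc U,
          Matrix.mul_assoc S, ← Matrix.mul_assoc Vᵀ V, hV, Matrix.one_mul]]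
      abel
  refine ⟨heq, ?_⟩
  have hNN : (Xd * L * V * F) * (Xd * L * V * F)ᴴ = Xd * L * V * F * Vᵀ * L * Xdᵀ := by
    rw [Matrix.conjTranspose_eq_transpose_of_trivial]
    simp only [Matrix.transpose_mul, Matrix.mul_assoc, hLT, hFT']
    rw [← Matrix.mul_assoc F F, hFF']
  have hGB : Matrix.fromBlocks (Xd * L * V * F * Vᵀ * L * Xdᵀ) 0 0
      (0 : Matrix (Fin (n_x+n_u)) (Fin (n_x+n_u)) ℝ) =
      (Matrix.fromBlocks (Xd * L * V * F) 0 0 (0 : Matrix (Fin (n_x+n_u)) (Fin n) ℝ)) *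
      (Matrix.fromBlocks (Xd * L * V * F) 0 0 (0 : Matrix (Fin (n_x+n_u)) (Fin n) ℝ))ᴴ := by
    rw [Matrix.fromBlocks_conjTranspose, Matrix.fromBlocks_multiply]
    simp only [Matrix.conjTranspose_zero, Matrix.mul_zero, Matrix.zero_mul, add_zero,
      zero_add, hNN]
  rw [heq, hGB]
  exact Matrix.posSemidef_self_mul_conjTranspose _
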